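/- Let α, β, ω, A be real numbers with ω ≠ 0, let u₀(t) = A·cos(ωt), and define u₁(t) = A·cos(ωt) + (A³/16)·sin(ωt)·[2ωt·(2α − 3β) + (2α − β)·sin(2ωt)]. Then u₁ is twice continuously differentiable, u₁(0) = A, u₁'(0) = 0, and for all t ∈ ℝ, u₁''(t) + ω²·u₁(t) + α·u₀(t)²·u₀''(t) + α·u₀(t)·u₀'(t)² + βω²·u₀(t)³ = 0. -/

import Mathlib

/-- The first-order Laplace-transform approximation
`u₁(t) = A cos(ωt) + (A³/16) sin(ωt)[2ωt(2α − 3β) + (2α − β) sin(2ωt)]` is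
twice continuously differentiable, satisfies `u₁(0) = A`, `u₁'(0) = 0`, and
`u₁'' + ω²u₁ + αu₀²u₀'' + αu₀(u₀')² + βω²u₀³ = 0` where `u₀(t) = A cos(ωt)`. -/
theorem cantilever_first_approximation (α β ω A : ℝ) (hω : ω ≠ 0)
    (u₀ u₁ : ℝ → ℝ)
    (hu₀ : ∀ t, u₀ t = A * Real.cos (ω * t))
    (hu₁ : ∀ t, u₁ t = A * Real.cos (ω * t) + A ^ 3 / 16 * Real.sin (ω * t)
      * (2 * ω * t * (2 * α - 3 * β) + (2 * α - β) * Real.sin (2 * ω * t))) :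
    ContDiff ℝ 2 u₁ ∧ u₁ 0 = A ∧ deriv u₁ 0 = 0 ∧
    ∀ t, deriv (deriv u₁) t + ω ^ 2 * u₁ t
      + α * (u₀ t) ^ 2 * deriv (deriv u₀) t + α * u₀ t * (deriv u₀ t) ^ 2
      + β * ω ^ 2 * (u₀ t) ^ 3 = 0 := by
  have hu₁e : u₁ = fun t => A * Real.cos (ω * t) + A ^ 3 / 16 * (Real.sin (ω * t)
      * (2 * ω * t * (2 * α - 3 * β) + (2 * α - β) * Real.sin (2 * ω * t))) :=
    funext fun t => by rw [hu₁]; ring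
  have hu₀e : u₀ = fun t => A * Real.cos (ω * t) := funext hu₀
  -- basic derivatives
  have hcos : ∀ t : ℝ, HasDerivAt (fun t => Real.cos (ω * t)) (-Real.sin (ω * t) * (ω * 1)) t :=
    fun t => ((hasDerivAt_id t).const_mul ω).cos
  have hsin : ∀ t : ℝ, HasDerivAt (fun t => Real.sin (ω * t)) (Real.cos (ω * t) * (ω * 1)) t :=
    fun t => ((hasDerivAt_id t).const_mul ω).sin
  have hsin2 : ∀ t : ℝ, HasDerivAt (fun t => Real.sin (2 * ω * t))
      (Real.cos (2 * ω * t) * (2 * ω * 1)) t :=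
    fun t => ((hasDerivAt_id t).const_mul (2 * ω)).sin
  have hcos2 : ∀ t : ℝ, HasDerivAt (fun t => Real.cos (2 * ω * t))
      (-Real.sin (2 * ω * t) * (2 * ω * 1)) t :=
    fun t => ((hasDerivAt_id t).const_mul (2 * ω)).cos
  have hlin : ∀ t : ℝ, HasDerivAt (fun t : ℝ => 2 * ω * t * (2 * α - 3 * β))
      (2 * ω * 1 * (2 * α - 3 * β)) t :=
    fun t => ((hasDerivAt_id t).const_mul (2 * ω)).mul_const (2 * α - 3 * β)
  -- first derivative of u₁
  set D : ℝ → ℝ := fun t => -(A * ω) * Real.sin (ω * t) + A ^ 3 / 16 *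
      (ω * Real.cos (ω * t) * (2 * ω * t * (2 * α - 3 * β) + (2 * α - β) * Real.sin (2 * ω * t))
        + Real.sin (ω * t) * (2 * ω * (2 * α - 3 * β)
          + 2 * ω * (2 * α - β) * Real.cos (2 * ω * t))) with hDdef
  have hD : ∀ t, HasDerivAt u₁ (D t) t := by
    intro t
    rw [hu₁e]
    have h := (((hcos t).const_mul A).add
      ((((hsin t).mul ((hlin t).add ((hsin2 t).const_mul (2 * α - β))))).const_mul (A ^ 3 / 16)))
    refine h.congr_deriv ?_
    simp [hDdef]; ring
  have hderiv1 : deriv u₁ = D := funext fun t => (hD t).deriv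
  -- second derivative of u₁
  set E : ℝ → ℝ := fun t => -(A * ω ^ 2) * Real.cos (ω * t) + A ^ 3 / 16 *
      (-(ω ^ 2) * Real.sin (ω * t)
          * (2 * ω * t * (2 * α - 3 * β) + (2 * α - β) * Real.sin (2 * ω * t))
        + 2 * ω * Real.cos (ω * t) * (2 * ω * (2 * α - 3 * β)
          + 2 * ω * (2 * α - β) * Real.cos (2 * ω * t))
        - 4 * ω ^ 2 * (2 * α - β) * Real.sin (ω * t) * Real.sin (2 * ω * t)) with hEdef
  have hE : ∀ t, HasDerivAt D (E t) t := by
    intro t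
    have h := (((hsin t).const_mul (-(A * ω))).add
      ((((((hcos t).const_mul ω).mul ((hlin t).add ((hsin2 t).const_mul (2 * α - β)))).add
        ((hsin t).mul
          (((hcos2 t).const_mul (2 * ω * (2 * α - β))).const_add
            (2 * ω * (2 * α - 3 * β)))))).const_mul (A ^ 3 / 16)))
    refine h.congr_deriv ?_
    simp [hEdef]; ring
  have hderiv2 : deriv (deriv u₁) = E := by rw [hderiv1]; exact funext fun t => (hE t).deriv
  -- derivatives of u₀
  have hd0 : ∀ t, HasDerivAt u₀ (-(A * ω) * Real.sin (ω * t)) t := by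
    intro t
    rw [hu₀e]
    have h := (hcos t).const_mul A
    exact h.congr_deriv (by ring)
  have hd0' : deriv u₀ = fun t => -(A * ω) * Real.sin (ω * t) := funext fun t => (hd0 t).deriv
  have hd02 : ∀ t, deriv (deriv u₀) t = -(A * ω ^ 2) * Real.cos (ω * t) := by
    intro t
    rw [hd0']
    have h := (hsin t).const_mul (-(A * ω))
    have : HasDerivAt (fun t => -(A * ω) * Real.sin (ω * t)) (-(A * ω ^ 2) * Real.cos (ω * t)) t := by
      exact h.congr_deriv (by ring)
    exact this.deriv
  refine ⟨?_, ?_, ?_, ?_⟩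
  · rw [hu₁e]
    apply ContDiff.add
    · exact contDiff_const.mul (Real.contDiff_cos.comp (contDiff_const.mul contDiff_id))
    · refine contDiff_const.mul (ContDiff.mul
        (Real.contDiff_sin.comp (contDiff_const.mul contDiff_id)) (ContDiff.add ?_ ?_))
      · exact ((contDiff_const.mul contDiff_id).mul contDiff_const)
      · exact contDiff_const.mul (Real.contDiff_sin.comp (contDiff_const.mul contDiff_id))
  · rw [hu₁]; simp
  · rw [hderiv1, hDdef]; simp
  · intro t
    rw [hderiv2, hu₁, hu₀, hd02, hd0']
    have h2 : (2 : ℝ) * ω * t = 2 * (ω * t) := by ring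
    simp only [hEdef, h2, Real.sin_two_mul, Real.cos_two_mul]
    have hpy := Real.sin_sq_add_cos_sq (ω * t)
    linear_combination (A ^ 3 * ω ^ 2 * β / 2 * Real.cos (ω * t)) * hpy
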